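/- For any finite Gibbs system on {−1,1}^N with two-body Hamiltonian, the function t ↦ E[log Tr exp(√t Σ a_{ij} J_{ij} σ_iσ_j + √(1−t) Σ b_{ij} J'_{ij} σ_iσ_j)] is differentiable on (0,1), with derivative given by (1/2) E[Σ a_{ij}²(1 − ⟨σ_iσ_j⟩²) − Σ b_{ij}²(1 − ⟨σ_iσ_j⟩²)] after Gaussian integration by parts, when J_{ij}, J'_{ij} are independent standard Gaussians. -/

import Mathlib

open MeasureTheory ProbabilityTheory

/-- The Ising spin value of a configuration at a site. -/
noncomputable def spin {N : ℕ} (σ : Fin N → Bool) (i : Fin N) : ℝ :=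
  if σ i then 1 else -1

/-- The Guerra–Toninelli interpolating exponent
`√t Σ a_{ij} J_{ij} σ_i σ_j + √(1-t) Σ b_{ij} J'_{ij} σ_i σ_j`. -/
noncomputable def gtInterpH {N : ℕ} (a b : Fin N → Fin N → ℝ) (t : ℝ)
    (J : (Fin N × Fin N → ℝ) × (Fin N × Fin N → ℝ)) (σ : Fin N → Bool) : ℝ :=
  Real.sqrt t * ∑ p : Fin N × Fin N, a p.1 p.2 * J.1 p * spin σ p.1 * spin σ p.2
    + Real.sqrt (1 - t) * ∑ p : Fin N × Fin N, b p.1 p.2 * J.2 p * spin σ p.1 * spin σ p.2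

/-- Gibbs average `⟨σ_i σ_j⟩` of the interpolating system at parameter `t`, disorder `J`. -/
noncomputable def gtInterpGibbs {N : ℕ} (a b : Fin N → Fin N → ℝ) (t : ℝ)
    (J : (Fin N × Fin N → ℝ) × (Fin N × Fin N → ℝ)) (i j : Fin N) : ℝ :=
  (∑ σ : Fin N → Bool, spin σ i * spin σ j * Real.exp (gtInterpH a b t J σ)) /
  (∑ σ : Fin N → Bool, Real.exp (gtInterpH a b t J σ))

/-- The disorder measure: two independent families of i.i.d. standard Gaussians. -/
noncomputable def disorderMeasure (N : ℕ) :
    Measure ((Fin N × Fin N → ℝ) × (Fin N × Fin N → ℝ)) :=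
  (Measure.pi fun _ : Fin N × Fin N => gaussianReal 0 1).prod
    (Measure.pi fun _ : Fin N × Fin N => gaussianReal 0 1)

namespace GTAux

open Real Function Set Filter
open scoped NNReal ENNReal

/-! ### Gaussian facts -/

noncomputable def gauss : Measure ℝ := gaussianReal 0 1

noncomputable def gpdf : ℝ → ℝ := gaussianPDFReal 0 1

instance : IsProbabilityMeasure gauss := by unfold gauss; infer_instance

lemma gpdf_nonneg (x : ℝ) : 0 ≤ gpdf x := gaussianPDFReal_nonneg 0 1 x

lemma gpdf_eq : gpdf = fun x => (Real.sqrt (2 * Real.pi))⁻¹ * Real.exp (-(x ^ 2) / 2) := by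
  funext x
  simp [gpdf, gaussianPDFReal]

lemma gpdf_cont : Continuous gpdf := by
  rw [gpdf_eq]; fun_prop

lemma hasDerivAt_gpdf (x : ℝ) : HasDerivAt gpdf (-x * gpdf x) x := by
  have h1 : HasDerivAt (fun x : ℝ => -(x ^ 2) / 2) (-x) x := by
    have := (hasDerivAt_pow 2 x).neg.div_const 2
    refine this.congr_deriv ?_
    norm_num
    ring
  have h2 := h1.exp.const_mul (Real.sqrt (2 * Real.pi))⁻¹
  rw [gpdf_eq]
  refine h2.congr_deriv ?_
  beta_reduce
  ring

lemma integral_gauss (f : ℝ → ℝ) : ∫ x, f x ∂gauss = ∫ x, gpdf x * f x := by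
  rw [gauss, gaussianReal_of_var_ne_zero 0 one_ne_zero]
  have hd : gaussianPDF 0 1
      = fun x => ((Real.toNNReal (gaussianPDFReal 0 1 x) : NNReal) : ENNReal) := by
    funext x
    simp [gaussianPDF, ENNReal.ofReal]
  rw [hd, integral_withDensity_eq_integral_smul
    ((measurable_gaussianPDFReal 0 1).real_toNNReal) f]
  congr 1
  funext x
  simp only [NNReal.smul_def, smul_eq_mul, Real.coe_toNNReal _ (gaussianPDFReal_nonneg 0 1 x)]
  rfl

lemma integrable_gpdf_vol : Integrable gpdf := integrable_gaussianPDFReal 0 1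

lemma integrable_mul_gpdf : Integrable (fun x => x * gpdf x) := by
  have h := (integrable_rpow_mul_exp_neg_mul_sq (b := (1:ℝ)/2) (by norm_num)
    (s := 1) (by norm_num)).const_mul (Real.sqrt (2*Real.pi))⁻¹
  have he : (fun x => x * gpdf x)
      = fun x => (Real.sqrt (2*Real.pi))⁻¹ * (x ^ (1:ℝ) * Real.exp (-(1/2) * x ^ 2)) := by
    funext x
    rw [gpdf_eq, Real.rpow_one]
    show x * ((Real.sqrt (2 * Real.pi))⁻¹ * Real.exp (-(x ^ 2) / 2)) = _
    rw [show -(x ^ 2) / 2 = -(1/2) * x ^ 2 by ring]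
    ring
  rw [he]
  exact h

lemma integrable_id_gauss : Integrable (fun x : ℝ => x) gauss := by
  rw [gauss, gaussianReal_of_var_ne_zero 0 one_ne_zero]
  rw [integrable_withDensity_iff (measurable_gaussianPDF 0 1)
    (ae_of_all _ fun x => ENNReal.ofReal_lt_top)]
  have he : (fun x : ℝ => x * (gaussianPDF 0 1 x).toReal) = fun x => x * gpdf x := by
    funext x
    rw [gaussianPDF, ENNReal.toReal_ofReal (gaussianPDFReal_nonneg 0 1 x)]
    rfl
  rw [he]
  exact integrable_mul_gpdf

/-- Gaussian integration by parts for bounded functions with bounded derivative. -/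
lemma gaussian_ibp (g g' : ℝ → ℝ) (C : ℝ) (hd : ∀ x, HasDerivAt g (g' x) x)
    (hg : ∀ x, |g x| ≤ 1) (hg' : ∀ x, |g' x| ≤ C) :
    ∫ x, x * g x ∂gauss = ∫ x, g' x ∂gauss := by
  have hgc : Continuous g := by
    rw [continuous_iff_continuousAt]; exact fun x => (hd x).continuousAt
  have hg'm : StronglyMeasurable g' := by
    have : g' = deriv g := funext fun x => ((hd x).deriv).symm
    rw [this]; exact stronglyMeasurable_deriv g
  have h1 : Integrable (fun x => g x * (-x * gpdf x)) := by
    refine Integrable.mono' integrable_mul_gpdf.abs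
      (hgc.aestronglyMeasurable.mul ((continuous_neg.mul gpdf_cont).aestronglyMeasurable))
      (ae_of_all _ fun x => ?_)
    rw [Real.norm_eq_abs, abs_mul]
    calc |g x| * |(-x * gpdf x)| ≤ 1 * |(-x * gpdf x)| :=
          mul_le_mul_of_nonneg_right (hg x) (abs_nonneg _)
      _ = |x * gpdf x| := by rw [one_mul, neg_mul, abs_neg]
  have h2 : Integrable (fun x => g' x * gpdf x) := by
    refine Integrable.mono' (integrable_gpdf_vol.const_mul C)
      (hg'm.aestronglyMeasurable.mul gpdf_cont.aestronglyMeasurable)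
      (ae_of_all _ fun x => ?_)
    rw [Real.norm_eq_abs, abs_mul, abs_of_nonneg (gpdf_nonneg x)]
    exact mul_le_mul_of_nonneg_right (hg' x) (gpdf_nonneg x)
  have h3 : Integrable (fun x => g x * gpdf x) := by
    refine Integrable.mono' integrable_gpdf_vol
      (hgc.aestronglyMeasurable.mul gpdf_cont.aestronglyMeasurable)
      (ae_of_all _ fun x => ?_)
    rw [Real.norm_eq_abs, abs_mul, abs_of_nonneg (gpdf_nonneg x)]
    calc |g x| * gpdf x ≤ 1 * gpdf x := mul_le_mul_of_nonneg_right (hg x) (gpdf_nonneg x)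
      _ = gpdf x := one_mul _
  have key := integral_mul_deriv_eq_deriv_mul_of_integrable
    (u := g) (v := gpdf) (u' := g') (v' := fun x => -x * gpdf x)
    (fun x _ => hd x) (fun x _ => hasDerivAt_gpdf x) h1 h2 h3
  rw [integral_gauss, integral_gauss]
  have e1 : (fun x => gpdf x * (x * g x)) = fun x => -(g x * (-x * gpdf x)) := by
    funext x; ring
  calc ∫ x, gpdf x * (x * g x) = ∫ x, -(g x * (-x * gpdf x)) := by rw [e1]
    _ = -∫ x, g x * (-x * gpdf x) := integral_neg _
    _ = ∫ x, g' x * gpdf x := by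
        rw [show (∫ x, g x * (-x * gpdf x)) = -∫ x, g' x * gpdf x from key, neg_neg]
    _ = ∫ x, gpdf x * g' x := by congr 1; funext x; ring

lemma integrable_of_bounded {α : Type*} [MeasurableSpace α] {μ : Measure α}
    [IsProbabilityMeasure μ] {f : α → ℝ} (hm : AEStronglyMeasurable f μ) (C : ℝ)
    (h : ∀ x, |f x| ≤ C) : Integrable f μ :=
  Integrable.mono' (integrable_const C) hm
    (ae_of_all _ fun x => by rw [Real.norm_eq_abs]; exact h x)

/-! ### Pi-measure update lemmas -/

variable {ι : Type*} [Fintype ι] [DecidableEq ι]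

lemma measurable_update_pair (i : ι) :
    Measurable (fun q : (ι → ℝ) × ℝ => Function.update q.1 i q.2) := by
  apply measurable_pi_lambda
  intro j
  by_cases h : j = i
  · subst h; simpa [Function.update_self] using measurable_snd
  · simp only [Function.update_of_ne h]
    exact (measurable_pi_apply j).comp measurable_fst

variable (ν : ι → Measure ℝ) [∀ i, IsProbabilityMeasure (ν i)]

lemma map_eval_pi (i : ι) : (Measure.pi ν).map (Function.eval i) = ν i := by
  apply Measure.ext
  intro s hs
  rw [Measure.map_apply (measurable_pi_apply i) hs]
  have : Function.eval i ⁻¹' s = Set.pi Set.univ (Function.update (fun _ : ι => (Set.univ : Set ℝ)) i s) := by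
    ext J
    simp [Function.update_apply]
  rw [this, Measure.pi_pi]
  rw [show (fun j => ν j (Function.update (fun _ : ι => (Set.univ : Set ℝ)) i s j))
      = Function.update (fun j => (ν j) Set.univ) i (ν i s) from ?_]
  · rw [Finset.prod_update_of_mem (Finset.mem_univ i)]
    simp [measure_univ]
  · funext j
    by_cases h : j = i
    · subst h; simp
    · simp [Function.update_of_ne h]

lemma map_update_pi (i : ι) :
    ((Measure.pi ν).prod (ν i)).map (fun q : (ι → ℝ) × ℝ => Function.update q.1 i q.2)
      = Measure.pi ν := by
  refine (Measure.pi_eq fun s hs => ?_).symm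
  rw [Measure.map_apply (measurable_update_pair i) (MeasurableSet.univ_pi hs)]
  have hpre : (fun q : (ι → ℝ) × ℝ => Function.update q.1 i q.2) ⁻¹' (Set.pi Set.univ s)
      = (Set.pi Set.univ (Function.update s i Set.univ)) ×ˢ (s i) := by
    ext ⟨J, x⟩
    simp only [Set.mem_preimage, Set.mem_pi, Set.mem_univ, forall_true_left, Set.mem_prod,
      true_implies]
    constructor
    · intro h
      refine ⟨fun j => ?_, by simpa using h i⟩
      by_cases hj : j = i
      · subst hj; simp
      · have := h j; simp [Function.update_of_ne hj] at this ⊢; exact this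
    · rintro ⟨h1, h2⟩ j
      by_cases hj : j = i
      · subst hj; simpa
      · have := h1 j; simp [Function.update_of_ne hj] at this ⊢; exact this
  rw [hpre, Measure.prod_prod, Measure.pi_pi]
  rw [show (fun j => ν j (Function.update s i Set.univ j))
      = Function.update (fun j => ν j (s j)) i 1 from ?_]
  · rw [Finset.prod_update_of_mem (Finset.mem_univ i), one_mul]
    rw [← Finset.prod_erase_mul _ _ (Finset.mem_univ i)]
    rw [Finset.erase_eq]
  · funext j
    by_cases h : j = i
    · subst h; simp [measure_univ]
    · simp [Function.update_of_ne h]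

lemma integral_update_pi (i : ι) (f : (ι → ℝ) → ℝ)
    (hf : Integrable f (Measure.pi ν)) :
    ∫ J, f J ∂(Measure.pi ν)
      = ∫ J, ∫ x, f (Function.update J i x) ∂(ν i) ∂(Measure.pi ν) := by
  have hmap := map_update_pi ν i
  have hfm : AEStronglyMeasurable f
      (((Measure.pi ν).prod (ν i)).map (fun q : (ι → ℝ) × ℝ => Function.update q.1 i q.2)) := by
    rw [hmap]; exact hf.aestronglyMeasurable
  have hint : Integrable (fun q : (ι → ℝ) × ℝ => f (Function.update q.1 i q.2))
      ((Measure.pi ν).prod (ν i)) := by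
    have := (integrable_map_measure hfm (measurable_update_pair i).aemeasurable).mp
      (by rw [hmap]; exact hf)
    exact this
  calc ∫ J, f J ∂(Measure.pi ν)
      = ∫ q, f (Function.update q.1 i q.2) ∂((Measure.pi ν).prod (ν i)) := by
        conv_lhs => rw [← hmap]
        rw [integral_map (measurable_update_pair i).aemeasurable hfm]
    _ = ∫ J, ∫ x, f (Function.update J i x) ∂(ν i) ∂(Measure.pi ν) :=
        integral_prod _ hint

end GTAux

namespace GTSys

open Real Function Set Filter GTAux

variable {N : ℕ}

noncomputable def gA (c : Fin N → Fin N → ℝ) (J1 : Fin N × Fin N → ℝ) (σ : Fin N → Bool) : ℝ :=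
  ∑ p : Fin N × Fin N, c p.1 p.2 * J1 p * spin σ p.1 * spin σ p.2

noncomputable def gZ (a b : Fin N → Fin N → ℝ) (s : ℝ)
    (J : (Fin N × Fin N → ℝ) × (Fin N × Fin N → ℝ)) : ℝ :=
  ∑ σ : Fin N → Bool, Real.exp (gtInterpH a b s J σ)

lemma gtInterpH_eq (a b : Fin N → Fin N → ℝ) (s : ℝ) (J) (σ) :
    gtInterpH a b s J σ = Real.sqrt s * gA a J.1 σ + Real.sqrt (1-s) * gA b J.2 σ := rfl

lemma abs_spin (σ : Fin N → Bool) (i : Fin N) : |spin σ i| = 1 := by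
  unfold spin; split <;> norm_num

lemma sq_spin2 (σ : Fin N → Bool) (i j : Fin N) : (spin σ i * spin σ j) ^ 2 = 1 := by
  unfold spin; split_ifs <;> norm_num

lemma gZ_pos (a b : Fin N → Fin N → ℝ) (s : ℝ) (J) : 0 < gZ a b s J :=
  Finset.sum_pos (fun _ _ => Real.exp_pos _) Finset.univ_nonempty

lemma sum_weight_bound {κ : Type*} [Fintype κ] (cf w : κ → ℝ) (hw : ∀ k, 0 < w k) (C : ℝ)
    (hc : ∀ k, |cf k| ≤ C) :
    |∑ k, w k * cf k| ≤ C * ∑ k, w k := by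
  calc |∑ k, w k * cf k| ≤ ∑ k, |w k * cf k| := Finset.abs_sum_le_sum_abs _ _
    _ ≤ ∑ k, C * w k := Finset.sum_le_sum fun k _ => by
        rw [abs_mul, abs_of_pos (hw k), mul_comm]
        exact mul_le_mul_of_nonneg_right (hc k) (hw k).le
    _ = C * ∑ k, w k := by rw [Finset.mul_sum]

lemma abs_gibbs_le_one (a b : Fin N → Fin N → ℝ) (t : ℝ) (J) (i j : Fin N) :
    |gtInterpGibbs a b t J i j| ≤ 1 := by
  have hz := gZ_pos a b t J
  unfold gtInterpGibbs
  rw [abs_div]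
  rw [abs_of_pos (show (0:ℝ) < ∑ σ : Fin N → Bool, Real.exp (gtInterpH a b t J σ) from hz)]
  rw [div_le_one (show (0:ℝ) < ∑ σ : Fin N → Bool, Real.exp (gtInterpH a b t J σ) from hz)]
  have := sum_weight_bound (fun σ : Fin N → Bool => spin σ i * spin σ j)
    (fun σ => Real.exp (gtInterpH a b t J σ)) (fun σ => Real.exp_pos _) 1
    (fun σ => by rw [abs_mul, abs_spin, abs_spin, one_mul])
  calc |∑ σ : Fin N → Bool, spin σ i * spin σ j * Real.exp (gtInterpH a b t J σ)|
      = |∑ σ : Fin N → Bool, Real.exp (gtInterpH a b t J σ) * (spin σ i * spin σ j)| := by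
        congr 1; apply Finset.sum_congr rfl; intro σ _; ring
    _ ≤ 1 * ∑ σ : Fin N → Bool, Real.exp (gtInterpH a b t J σ) := this
    _ = gZ a b t J := by rw [one_mul]; rfl

lemma continuous_H (a b : Fin N → Fin N → ℝ) (s : ℝ) (σ : Fin N → Bool) :
    Continuous fun J : (Fin N × Fin N → ℝ) × (Fin N × Fin N → ℝ) => gtInterpH a b s J σ := by
  unfold gtInterpH
  fun_prop

lemma continuous_gZ (a b : Fin N → Fin N → ℝ) (s : ℝ) :
    Continuous fun J : (Fin N × Fin N → ℝ) × (Fin N × Fin N → ℝ) => gZ a b s J := by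
  unfold gZ
  exact continuous_finset_sum _ fun σ _ => (continuous_H a b s σ).rexp

lemma continuous_gibbs (a b : Fin N → Fin N → ℝ) (t : ℝ) (i j : Fin N) :
    Continuous fun J : (Fin N × Fin N → ℝ) × (Fin N × Fin N → ℝ) =>
      gtInterpGibbs a b t J i j := by
  unfold gtInterpGibbs
  apply Continuous.div
  · exact continuous_finset_sum _ fun σ _ => continuous_const.mul (continuous_H a b t σ).rexp
  · exact continuous_gZ a b t
  · exact fun J => (gZ_pos a b t J).ne'

/-! ### Derivative in the interpolation parameter -/

noncomputable def gdF (a b : Fin N → Fin N → ℝ) (s : ℝ)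
    (J : (Fin N × Fin N → ℝ) × (Fin N × Fin N → ℝ)) : ℝ :=
  (∑ σ : Fin N → Bool, Real.exp (gtInterpH a b s J σ) *
      (gA a J.1 σ / (2 * Real.sqrt s) - gA b J.2 σ / (2 * Real.sqrt (1 - s)))) / gZ a b s J

lemma hasDerivAt_H_s (a b : Fin N → Fin N → ℝ) {s : ℝ} (hs : s ∈ Set.Ioo (0:ℝ) 1) (J) (σ) :
    HasDerivAt (fun s => gtInterpH a b s J σ)
      (gA a J.1 σ / (2 * Real.sqrt s) - gA b J.2 σ / (2 * Real.sqrt (1-s))) s := by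
  have h1 : HasDerivAt (fun s : ℝ => Real.sqrt s) (1/(2 * Real.sqrt s)) s :=
    Real.hasDerivAt_sqrt hs.1.ne'
  have h3 : HasDerivAt (fun s : ℝ => 1 - s) (-1) s := (hasDerivAt_id s).const_sub 1
  have h2 : HasDerivAt (fun s : ℝ => Real.sqrt (1 - s)) ((-1) / (2 * Real.sqrt (1-s))) s :=
    h3.sqrt (sub_ne_zero.mpr (ne_of_lt hs.2).symm)
  have h4 := (h1.mul_const (gA a J.1 σ)).add (h2.mul_const (gA b J.2 σ))
  have he : (fun s => gtInterpH a b s J σ)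
      = fun s : ℝ => Real.sqrt s * gA a J.1 σ + Real.sqrt (1-s) * gA b J.2 σ := rfl
  rw [he]
  refine h4.congr_deriv ?_
  ring

lemma hasDerivAt_log_gZ (a b : Fin N → Fin N → ℝ) {s : ℝ} (hs : s ∈ Set.Ioo (0:ℝ) 1) (J) :
    HasDerivAt (fun s => Real.log (gZ a b s J)) (gdF a b s J) s := by
  have hZ : HasDerivAt (fun s => gZ a b s J)
      (∑ σ : Fin N → Bool, Real.exp (gtInterpH a b s J σ) *
        (gA a J.1 σ / (2 * Real.sqrt s) - gA b J.2 σ / (2 * Real.sqrt (1-s)))) s :=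
    HasDerivAt.fun_sum fun σ _ => (hasDerivAt_H_s a b hs J σ).exp
  exact hZ.log (gZ_pos a b s J).ne'

noncomputable def gNum (a b : Fin N → Fin N → ℝ) (t : ℝ)
    (J : (Fin N × Fin N → ℝ) × (Fin N × Fin N → ℝ)) (p : Fin N × Fin N) : ℝ :=
  ∑ σ : Fin N → Bool, spin σ p.1 * spin σ p.2 * Real.exp (gtInterpH a b t J σ)

lemma gibbs_def (a b : Fin N → Fin N → ℝ) (t : ℝ) (J) (p : Fin N × Fin N) :
    gtInterpGibbs a b t J p.1 p.2 = gNum a b t J p / gZ a b t J := rfl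

lemma gdF_eq (a b : Fin N → Fin N → ℝ) (s : ℝ) (J) :
    gdF a b s J
      = (∑ p : Fin N × Fin N,
          (a p.1 p.2 * J.1 p / (2 * Real.sqrt s)) * gtInterpGibbs a b s J p.1 p.2)
        - ∑ p : Fin N × Fin N,
          (b p.1 p.2 * J.2 p / (2 * Real.sqrt (1-s))) * gtInterpGibbs a b s J p.1 p.2 := by
  have hnum : (∑ σ : Fin N → Bool, Real.exp (gtInterpH a b s J σ) *
      (gA a J.1 σ / (2 * Real.sqrt s) - gA b J.2 σ / (2 * Real.sqrt (1 - s))))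
      = (∑ p : Fin N × Fin N, (a p.1 p.2 * J.1 p / (2 * Real.sqrt s)) * gNum a b s J p)
        - ∑ p : Fin N × Fin N, (b p.1 p.2 * J.2 p / (2 * Real.sqrt (1-s))) * gNum a b s J p := by
    simp only [mul_sub, Finset.sum_sub_distrib]
    congr 1
    · unfold gA gNum
      simp only [Finset.sum_div, Finset.mul_sum]
      rw [Finset.sum_comm]
      exact Finset.sum_congr rfl fun p _ => Finset.sum_congr rfl fun σ _ => by ring
    · unfold gA gNum
      simp only [Finset.sum_div, Finset.mul_sum]
      rw [Finset.sum_comm]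
      exact Finset.sum_congr rfl fun p _ => Finset.sum_congr rfl fun σ _ => by ring
  unfold gdF
  rw [hnum]
  simp only [gibbs_def, mul_div_assoc']
  rw [← Finset.sum_div, ← Finset.sum_div, div_sub_div_same]

/-! ### Bounds -/

lemma abs_gA_le (c : Fin N → Fin N → ℝ) (hc : ∀ i j, 0 ≤ c i j) (J1) (σ : Fin N → Bool) :
    |gA c J1 σ| ≤ ∑ p : Fin N × Fin N, c p.1 p.2 * |J1 p| := by
  unfold gA
  refine (Finset.abs_sum_le_sum_abs _ _).trans (Finset.sum_le_sum fun p _ => ?_)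
  rw [abs_mul, abs_mul, abs_mul, abs_spin, abs_spin, abs_of_nonneg (hc p.1 p.2)]
  simp

lemma abs_gdF_le (a b : Fin N → Fin N → ℝ) (ha : ∀ i j, 0 ≤ a i j) (hb : ∀ i j, 0 ≤ b i j)
    (s : ℝ) (J) :
    |gdF a b s J| ≤ (2 * Real.sqrt s)⁻¹ * (∑ p : Fin N × Fin N, a p.1 p.2 * |J.1 p|)
      + (2 * Real.sqrt (1-s))⁻¹ * (∑ p : Fin N × Fin N, b p.1 p.2 * |J.2 p|) := by
  have hz := gZ_pos a b s J
  set C := (2 * Real.sqrt s)⁻¹ * (∑ p : Fin N × Fin N, a p.1 p.2 * |J.1 p|)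
      + (2 * Real.sqrt (1-s))⁻¹ * (∑ p : Fin N × Fin N, b p.1 p.2 * |J.2 p|) with hC
  have hcterm : ∀ σ : Fin N → Bool,
      |gA a J.1 σ / (2 * Real.sqrt s) - gA b J.2 σ / (2 * Real.sqrt (1-s))| ≤ C := by
    intro σ
    have h1 : |gA a J.1 σ / (2 * Real.sqrt s)|
        ≤ (2 * Real.sqrt s)⁻¹ * (∑ p : Fin N × Fin N, a p.1 p.2 * |J.1 p|) := by
      rw [div_eq_mul_inv, abs_mul, abs_inv, mul_comm]
      have h2s : |2 * Real.sqrt s| = 2 * Real.sqrt s := by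
        rw [abs_of_nonneg]; positivity
      rw [h2s]
      exact mul_le_mul_of_nonneg_left (abs_gA_le a ha J.1 σ) (by positivity)
    have h2 : |gA b J.2 σ / (2 * Real.sqrt (1-s))|
        ≤ (2 * Real.sqrt (1-s))⁻¹ * (∑ p : Fin N × Fin N, b p.1 p.2 * |J.2 p|) := by
      rw [div_eq_mul_inv, abs_mul, abs_inv, mul_comm]
      have h2s : |2 * Real.sqrt (1-s)| = 2 * Real.sqrt (1-s) := by
        rw [abs_of_nonneg]; positivity
      rw [h2s]
      exact mul_le_mul_of_nonneg_left (abs_gA_le b hb J.2 σ) (by positivity)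
    calc |gA a J.1 σ / (2 * Real.sqrt s) - gA b J.2 σ / (2 * Real.sqrt (1-s))|
        ≤ |gA a J.1 σ / (2 * Real.sqrt s)| + |gA b J.2 σ / (2 * Real.sqrt (1-s))| :=
          abs_sub _ _
      _ ≤ C := add_le_add h1 h2
  unfold gdF
  rw [abs_div, abs_of_pos (show (0:ℝ) < gZ a b s J from hz)]
  rw [div_le_iff₀ (show (0:ℝ) < gZ a b s J from hz)]
  calc |∑ σ : Fin N → Bool, Real.exp (gtInterpH a b s J σ) *
        (gA a J.1 σ / (2 * Real.sqrt s) - gA b J.2 σ / (2 * Real.sqrt (1-s)))|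
      ≤ C * ∑ σ : Fin N → Bool, Real.exp (gtInterpH a b s J σ) :=
        sum_weight_bound _ _ (fun σ => Real.exp_pos _) C hcterm
    _ = C * gZ a b s J := rfl

lemma abs_log_gZ_le (a b : Fin N → Fin N → ℝ) (ha : ∀ i j, 0 ≤ a i j)
    (hb : ∀ i j, 0 ≤ b i j) {s : ℝ} (hs0 : 0 ≤ s) (hs1 : s ≤ 1) (J) :
    |Real.log (gZ a b s J)|
      ≤ Real.log (Fintype.card (Fin N → Bool))
        + ((∑ p : Fin N × Fin N, a p.1 p.2 * |J.1 p|)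
          + (∑ p : Fin N × Fin N, b p.1 p.2 * |J.2 p|)) := by
  set M := (∑ p : Fin N × Fin N, a p.1 p.2 * |J.1 p|)
      + (∑ p : Fin N × Fin N, b p.1 p.2 * |J.2 p|) with hM
  have hM0 : 0 ≤ M := by
    apply add_nonneg <;> apply Finset.sum_nonneg <;> intro p _ <;>
      exact mul_nonneg (by first | exact ha p.1 p.2 | exact hb p.1 p.2) (abs_nonneg _)
  have hHle : ∀ σ : Fin N → Bool, |gtInterpH a b s J σ| ≤ M := by
    intro σ
    rw [gtInterpH_eq]
    have h1 : |Real.sqrt s * gA a J.1 σ| ≤ ∑ p : Fin N × Fin N, a p.1 p.2 * |J.1 p| := by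
      rw [abs_mul, abs_of_nonneg (Real.sqrt_nonneg s)]
      calc Real.sqrt s * |gA a J.1 σ| ≤ 1 * |gA a J.1 σ| :=
            mul_le_mul_of_nonneg_right (Real.sqrt_le_one.mpr hs1) (abs_nonneg _)
        _ = |gA a J.1 σ| := one_mul _
        _ ≤ _ := abs_gA_le a ha J.1 σ
    have h2 : |Real.sqrt (1-s) * gA b J.2 σ| ≤ ∑ p : Fin N × Fin N, b p.1 p.2 * |J.2 p| := by
      rw [abs_mul, abs_of_nonneg (Real.sqrt_nonneg _)]
      calc Real.sqrt (1-s) * |gA b J.2 σ| ≤ 1 * |gA b J.2 σ| :=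
            mul_le_mul_of_nonneg_right (Real.sqrt_le_one.mpr (by linarith)) (abs_nonneg _)
        _ = |gA b J.2 σ| := one_mul _
        _ ≤ _ := abs_gA_le b hb J.2 σ
    calc |Real.sqrt s * gA a J.1 σ + Real.sqrt (1-s) * gA b J.2 σ|
        ≤ |Real.sqrt s * gA a J.1 σ| + |Real.sqrt (1-s) * gA b J.2 σ| := abs_add_le _ _
      _ ≤ M := add_le_add h1 h2
  have hcard : (1:ℝ) ≤ (Fintype.card (Fin N → Bool) : ℝ) := by
    exact_mod_cast Fintype.card_pos
  have hup : gZ a b s J ≤ (Fintype.card (Fin N → Bool) : ℝ) * Real.exp M := by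
    unfold gZ
    calc (∑ σ : Fin N → Bool, Real.exp (gtInterpH a b s J σ))
        ≤ ∑ _σ : Fin N → Bool, Real.exp M :=
          Finset.sum_le_sum fun σ _ => Real.exp_le_exp.mpr ((abs_le.mp (hHle σ)).2)
      _ = (Fintype.card (Fin N → Bool) : ℝ) * Real.exp M := by
          rw [Finset.sum_const, Finset.card_univ, nsmul_eq_mul]
  have hlow : Real.exp (-M) ≤ gZ a b s J := by
    obtain ⟨σ₀⟩ : Nonempty (Fin N → Bool) := inferInstance
    calc Real.exp (-M) ≤ Real.exp (gtInterpH a b s J σ₀) :=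
          Real.exp_le_exp.mpr (by have := (abs_le.mp (hHle σ₀)).1; linarith)
      _ ≤ gZ a b s J := Finset.single_le_sum
          (fun σ _ => (Real.exp_pos (gtInterpH a b s J σ)).le) (Finset.mem_univ σ₀)
  rw [abs_le]
  constructor
  · have := Real.log_le_log (Real.exp_pos (-M)) hlow
    rw [Real.log_exp] at this
    have hlog0 : 0 ≤ Real.log (Fintype.card (Fin N → Bool)) := Real.log_nonneg hcard
    linarith
  · have := Real.log_le_log (gZ_pos a b s J) hup
    rw [Real.log_mul (by linarith) (Real.exp_ne_zero _), Real.log_exp] at this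
    linarith

/-! ### Derivative of the Gibbs average in one coupling coordinate -/

lemma gibbs_core {κ : Type*} [Fintype κ] [Nonempty κ] (sg c : κ → ℝ) (r : ℝ)
    (hs : ∀ k, sg k ^ 2 = 1) (x : ℝ) :
    HasDerivAt (fun y => (∑ k, sg k * Real.exp (c k + r * sg k * y))
        / (∑ k, Real.exp (c k + r * sg k * y)))
      (r * (1 - ((∑ k, sg k * Real.exp (c k + r * sg k * x))
        / (∑ k, Real.exp (c k + r * sg k * x))) ^ 2)) x := by
  set num := ∑ k, sg k * Real.exp (c k + r * sg k * x) with hnumdef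
  set den := ∑ k, Real.exp (c k + r * sg k * x) with hdendef
  have hden : 0 < den := Finset.sum_pos (fun k _ => Real.exp_pos _) Finset.univ_nonempty
  have hlin : ∀ k : κ, HasDerivAt (fun y : ℝ => c k + r * sg k * y) (r * sg k) x := by
    intro k
    simpa using ((hasDerivAt_id x).const_mul (r * sg k)).const_add (c k)
  have hnum' : HasDerivAt (fun y => ∑ k, sg k * Real.exp (c k + r * sg k * y))
      (∑ k, sg k * (Real.exp (c k + r * sg k * x) * (r * sg k))) x :=
    HasDerivAt.fun_sum fun k _ => ((hlin k).exp).const_mul (sg k)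
  have hden' : HasDerivAt (fun y => ∑ k, Real.exp (c k + r * sg k * y))
      (∑ k, Real.exp (c k + r * sg k * x) * (r * sg k)) x :=
    HasDerivAt.fun_sum fun k _ => (hlin k).exp
  have e1 : (∑ k, sg k * (Real.exp (c k + r * sg k * x) * (r * sg k))) = r * den := by
    rw [hdendef, Finset.mul_sum]
    refine Finset.sum_congr rfl fun k _ => ?_
    calc sg k * (Real.exp (c k + r * sg k * x) * (r * sg k))
        = r * (sg k ^ 2 * Real.exp (c k + r * sg k * x)) := by ring
      _ = r * Real.exp (c k + r * sg k * x) := by rw [hs k, one_mul]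
  have e2 : (∑ k, Real.exp (c k + r * sg k * x) * (r * sg k)) = r * num := by
    rw [hnumdef, Finset.mul_sum]
    exact Finset.sum_congr rfl fun k _ => by ring
  have hdiv := hnum'.div hden' hden.ne'
  rw [e1, e2] at hdiv
  refine hdiv.congr_deriv ?_
  rw [← hdendef, ← hnumdef]
  field_simp

lemma gA_update (c : Fin N → Fin N → ℝ) (J1 : Fin N × Fin N → ℝ) (q : Fin N × Fin N)
    (x : ℝ) (σ : Fin N → Bool) :
    gA c (Function.update J1 q x) σ
      = gA c (Function.update J1 q 0) σ + c q.1 q.2 * (spin σ q.1 * spin σ q.2) * x := by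
  have e1 : ∀ y : ℝ, gA c (Function.update J1 q y) σ
      = c q.1 q.2 * y * spin σ q.1 * spin σ q.2
        + ∑ p ∈ Finset.univ.erase q, c p.1 p.2 * J1 p * spin σ p.1 * spin σ p.2 := by
    intro y
    unfold gA
    rw [← Finset.add_sum_erase _ _ (Finset.mem_univ q), Function.update_self]
    congr 1
    refine Finset.sum_congr rfl fun p hp => ?_
    rw [Function.update_of_ne (Finset.ne_of_mem_erase hp)]
  rw [e1 x, e1 0]
  ring

lemma H_update_fst (a b : Fin N → Fin N → ℝ) (t : ℝ)
    (J : (Fin N × Fin N → ℝ) × (Fin N × Fin N → ℝ)) (q : Fin N × Fin N) (y : ℝ)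
    (σ : Fin N → Bool) :
    gtInterpH a b t (Function.update J.1 q y, J.2) σ
      = gtInterpH a b t (Function.update J.1 q 0, J.2) σ
        + Real.sqrt t * a q.1 q.2 * (spin σ q.1 * spin σ q.2) * y := by
  rw [gtInterpH_eq, gtInterpH_eq]
  show Real.sqrt t * gA a (Function.update J.1 q y) σ + Real.sqrt (1-t) * gA b J.2 σ = _
  rw [gA_update a J.1 q y σ]
  ring

lemma H_update_snd (a b : Fin N → Fin N → ℝ) (t : ℝ)
    (J : (Fin N × Fin N → ℝ) × (Fin N × Fin N → ℝ)) (q : Fin N × Fin N) (y : ℝ)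
    (σ : Fin N → Bool) :
    gtInterpH a b t (J.1, Function.update J.2 q y) σ
      = gtInterpH a b t (J.1, Function.update J.2 q 0) σ
        + Real.sqrt (1-t) * b q.1 q.2 * (spin σ q.1 * spin σ q.2) * y := by
  rw [gtInterpH_eq, gtInterpH_eq]
  show Real.sqrt t * gA a J.1 σ + Real.sqrt (1-t) * gA b (Function.update J.2 q y) σ = _
  rw [gA_update b J.2 q y σ]
  ring

lemma hasDerivAt_gibbs_fst (a b : Fin N → Fin N → ℝ) (t : ℝ)
    (J : (Fin N × Fin N → ℝ) × (Fin N × Fin N → ℝ)) (q : Fin N × Fin N) (x : ℝ) :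
    HasDerivAt (fun y => gtInterpGibbs a b t (Function.update J.1 q y, J.2) q.1 q.2)
      (Real.sqrt t * a q.1 q.2 *
        (1 - gtInterpGibbs a b t (Function.update J.1 q x, J.2) q.1 q.2 ^ 2)) x := by
  have hfun : ∀ y : ℝ, gtInterpGibbs a b t (Function.update J.1 q y, J.2) q.1 q.2
      = (∑ σ : Fin N → Bool, (spin σ q.1 * spin σ q.2) *
          Real.exp (gtInterpH a b t (Function.update J.1 q 0, J.2) σ
            + (Real.sqrt t * a q.1 q.2) * (spin σ q.1 * spin σ q.2) * y))
        / (∑ σ : Fin N → Bool,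
          Real.exp (gtInterpH a b t (Function.update J.1 q 0, J.2) σ
            + (Real.sqrt t * a q.1 q.2) * (spin σ q.1 * spin σ q.2) * y)) := by
    intro y
    unfold gtInterpGibbs
    congr 1
    · refine Finset.sum_congr rfl fun σ _ => ?_
      rw [H_update_fst a b t J q y σ]
    · refine Finset.sum_congr rfl fun σ _ => ?_
      rw [H_update_fst a b t J q y σ]
  have hcore := gibbs_core (fun σ : Fin N → Bool => spin σ q.1 * spin σ q.2)
    (fun σ => gtInterpH a b t (Function.update J.1 q 0, J.2) σ)
    (Real.sqrt t * a q.1 q.2) (fun σ => sq_spin2 σ q.1 q.2) x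
  have hfe : (fun y => gtInterpGibbs a b t (Function.update J.1 q y, J.2) q.1 q.2)
      = fun y => (∑ σ : Fin N → Bool, (spin σ q.1 * spin σ q.2) *
          Real.exp (gtInterpH a b t (Function.update J.1 q 0, J.2) σ
            + (Real.sqrt t * a q.1 q.2) * (spin σ q.1 * spin σ q.2) * y))
        / (∑ σ : Fin N → Bool,
          Real.exp (gtInterpH a b t (Function.update J.1 q 0, J.2) σ
            + (Real.sqrt t * a q.1 q.2) * (spin σ q.1 * spin σ q.2) * y)) :=
    funext hfun
  rw [hfe, hfun x]
  exact hcore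

lemma hasDerivAt_gibbs_snd (a b : Fin N → Fin N → ℝ) (t : ℝ)
    (J : (Fin N × Fin N → ℝ) × (Fin N × Fin N → ℝ)) (q : Fin N × Fin N) (x : ℝ) :
    HasDerivAt (fun y => gtInterpGibbs a b t (J.1, Function.update J.2 q y) q.1 q.2)
      (Real.sqrt (1-t) * b q.1 q.2 *
        (1 - gtInterpGibbs a b t (J.1, Function.update J.2 q x) q.1 q.2 ^ 2)) x := by
  have hfun : ∀ y : ℝ, gtInterpGibbs a b t (J.1, Function.update J.2 q y) q.1 q.2
      = (∑ σ : Fin N → Bool, (spin σ q.1 * spin σ q.2) *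
          Real.exp (gtInterpH a b t (J.1, Function.update J.2 q 0) σ
            + (Real.sqrt (1-t) * b q.1 q.2) * (spin σ q.1 * spin σ q.2) * y))
        / (∑ σ : Fin N → Bool,
          Real.exp (gtInterpH a b t (J.1, Function.update J.2 q 0) σ
            + (Real.sqrt (1-t) * b q.1 q.2) * (spin σ q.1 * spin σ q.2) * y)) := by
    intro y
    unfold gtInterpGibbs
    congr 1
    · refine Finset.sum_congr rfl fun σ _ => ?_
      rw [H_update_snd a b t J q y σ]
    · refine Finset.sum_congr rfl fun σ _ => ?_
      rw [H_update_snd a b t J q y σ]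
  have hcore := gibbs_core (fun σ : Fin N → Bool => spin σ q.1 * spin σ q.2)
    (fun σ => gtInterpH a b t (J.1, Function.update J.2 q 0) σ)
    (Real.sqrt (1-t) * b q.1 q.2) (fun σ => sq_spin2 σ q.1 q.2) x
  rw [funext hfun, hfun x]
  exact hcore

/-! ### Integrability over the disorder -/

lemma one_sub_sq_bounds (a b : Fin N → Fin N → ℝ) (t : ℝ) (J) (i j : Fin N) :
    0 ≤ 1 - gtInterpGibbs a b t J i j ^ 2 ∧ 1 - gtInterpGibbs a b t J i j ^ 2 ≤ 1 := by
  have h := abs_le.mp (abs_gibbs_le_one a b t J i j)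
  constructor
  · nlinarith [h.1, h.2]
  · nlinarith [sq_nonneg (gtInterpGibbs a b t J i j)]

lemma disorder_eq :
    disorderMeasure N = (Measure.pi fun _ : Fin N × Fin N => gauss).prod
      (Measure.pi fun _ : Fin N × Fin N => gauss) := rfl

instance : IsProbabilityMeasure (Measure.pi fun _ : Fin N × Fin N => gauss) :=
  Measure.pi.instIsProbabilityMeasure _

instance : IsProbabilityMeasure (disorderMeasure N) := by
  rw [disorder_eq]; infer_instance

lemma integrable_eval_piG (p : Fin N × Fin N) :
    Integrable (fun J1 : Fin N × Fin N → ℝ => J1 p)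
      (Measure.pi fun _ : Fin N × Fin N => gauss) := by
  have h := map_eval_pi (fun _ : Fin N × Fin N => gauss) p
  have h2 : Integrable (fun y : ℝ => y)
      ((Measure.pi fun _ : Fin N × Fin N => gauss).map (Function.eval p)) := by
    rw [h]; exact integrable_id_gauss
  exact (integrable_map_measure h2.aestronglyMeasurable
    (measurable_pi_apply p).aemeasurable).mp h2

lemma integrable_fst_eval (p : Fin N × Fin N) :
    Integrable (fun J : (Fin N × Fin N → ℝ) × (Fin N × Fin N → ℝ) => J.1 p)
      (disorderMeasure N) := by
  have hm : (disorderMeasure N).map Prod.fst = Measure.pi fun _ : Fin N × Fin N => gauss := by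
    rw [disorder_eq, Measure.map_fst_prod]; simp
  have h2 : Integrable (fun J1 : Fin N × Fin N → ℝ => J1 p)
      ((disorderMeasure N).map Prod.fst) := by
    rw [hm]; exact integrable_eval_piG p
  exact (integrable_map_measure h2.aestronglyMeasurable measurable_fst.aemeasurable).mp h2

lemma integrable_snd_eval (p : Fin N × Fin N) :
    Integrable (fun J : (Fin N × Fin N → ℝ) × (Fin N × Fin N → ℝ) => J.2 p)
      (disorderMeasure N) := by
  have hm : (disorderMeasure N).map Prod.snd = Measure.pi fun _ : Fin N × Fin N => gauss := by
    rw [disorder_eq, Measure.map_snd_prod]; simp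
  have h2 : Integrable (fun J1 : Fin N × Fin N → ℝ => J1 p)
      ((disorderMeasure N).map Prod.snd) := by
    rw [hm]; exact integrable_eval_piG p
  exact (integrable_map_measure h2.aestronglyMeasurable measurable_snd.aemeasurable).mp h2

/-! ### Gaussian integration by parts in a single coupling -/

lemma inner_ibp_fst (a b : Fin N → Fin N → ℝ) (ha : ∀ i j, 0 ≤ a i j) (t : ℝ)
    (q : Fin N × Fin N) (J2 : Fin N × Fin N → ℝ) :
    ∫ J1, J1 q * gtInterpGibbs a b t (J1, J2) q.1 q.2
        ∂(Measure.pi fun _ : Fin N × Fin N => gauss)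
      = Real.sqrt t * a q.1 q.2 *
        ∫ J1, (1 - gtInterpGibbs a b t (J1, J2) q.1 q.2 ^ 2)
          ∂(Measure.pi fun _ : Fin N × Fin N => gauss) := by
  have hGc : Continuous fun J1 : Fin N × Fin N → ℝ => gtInterpGibbs a b t (J1, J2) q.1 q.2 :=
    (continuous_gibbs a b t q.1 q.2).comp (continuous_id.prodMk continuous_const)
  have hGb : ∀ J1, |gtInterpGibbs a b t (J1, J2) q.1 q.2| ≤ 1 :=
    fun J1 => abs_gibbs_le_one a b t (J1, J2) q.1 q.2
  have hr : 0 ≤ Real.sqrt t * a q.1 q.2 :=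
    mul_nonneg (Real.sqrt_nonneg t) (ha q.1 q.2)
  have hf2b : ∀ J1 : Fin N × Fin N → ℝ,
      |Real.sqrt t * a q.1 q.2 * (1 - gtInterpGibbs a b t (J1, J2) q.1 q.2 ^ 2)|
        ≤ Real.sqrt t * a q.1 q.2 := by
    intro J1
    obtain ⟨h1, h2⟩ := one_sub_sq_bounds a b t (J1, J2) q.1 q.2
    rw [abs_mul, abs_of_nonneg hr, abs_of_nonneg h1]
    calc Real.sqrt t * a q.1 q.2 * (1 - gtInterpGibbs a b t (J1, J2) q.1 q.2 ^ 2)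
        ≤ Real.sqrt t * a q.1 q.2 * 1 := mul_le_mul_of_nonneg_left h2 hr
      _ = Real.sqrt t * a q.1 q.2 := mul_one _
  have hfint : Integrable (fun J1 : Fin N × Fin N → ℝ =>
      J1 q * gtInterpGibbs a b t (J1, J2) q.1 q.2)
      (Measure.pi fun _ : Fin N × Fin N => gauss) := by
    refine Integrable.mono' (integrable_eval_piG q).abs
      (((continuous_apply q).mul hGc).aestronglyMeasurable) (ae_of_all _ fun J1 => ?_)
    rw [Real.norm_eq_abs]
    calc |J1 q * gtInterpGibbs a b t (J1, J2) q.1 q.2|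
        = |J1 q| * |gtInterpGibbs a b t (J1, J2) q.1 q.2| := abs_mul _ _
      _ ≤ |J1 q| * 1 := mul_le_mul_of_nonneg_left (hGb J1) (abs_nonneg _)
      _ = |J1 q| := mul_one _
  have hf2int : Integrable (fun J1 : Fin N × Fin N → ℝ =>
      Real.sqrt t * a q.1 q.2 * (1 - gtInterpGibbs a b t (J1, J2) q.1 q.2 ^ 2))
      (Measure.pi fun _ : Fin N × Fin N => gauss) :=
    integrable_of_bounded
      ((continuous_const.mul (continuous_const.sub (hGc.pow 2))).aestronglyMeasurable)
      _ hf2b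
  rw [integral_update_pi (fun _ : Fin N × Fin N => gauss) q
    (fun J1 => J1 q * gtInterpGibbs a b t (J1, J2) q.1 q.2) hfint]
  have hinner : (fun J1 => ∫ x, (fun J1 => J1 q * gtInterpGibbs a b t (J1, J2) q.1 q.2)
        (Function.update J1 q x) ∂gauss)
      = fun J1 => ∫ x, (fun J1 => Real.sqrt t * a q.1 q.2 *
          (1 - gtInterpGibbs a b t (J1, J2) q.1 q.2 ^ 2)) (Function.update J1 q x) ∂gauss := by
    funext J1
    have hshape : (fun x => (fun J1 => J1 q * gtInterpGibbs a b t (J1, J2) q.1 q.2)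
        (Function.update J1 q x))
        = fun x => x * gtInterpGibbs a b t (Function.update J1 q x, J2) q.1 q.2 := by
      funext x
      simp [Function.update_self]
    rw [hshape]
    have hd : ∀ x, HasDerivAt
        (fun y => gtInterpGibbs a b t (Function.update J1 q y, J2) q.1 q.2)
        (Real.sqrt t * a q.1 q.2 *
          (1 - gtInterpGibbs a b t (Function.update J1 q x, J2) q.1 q.2 ^ 2)) x :=
      fun x => hasDerivAt_gibbs_fst a b t (J1, J2) q x
    exact gaussian_ibp _ _ (Real.sqrt t * a q.1 q.2) hd (fun x => hGb _) (fun x => hf2b _)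
  rw [hinner]
  rw [← integral_update_pi (fun _ : Fin N × Fin N => gauss) q
    (fun J1 => Real.sqrt t * a q.1 q.2 *
      (1 - gtInterpGibbs a b t (J1, J2) q.1 q.2 ^ 2)) hf2int]
  exact integral_const_mul _ _

lemma inner_ibp_snd (a b : Fin N → Fin N → ℝ) (hb : ∀ i j, 0 ≤ b i j) (t : ℝ)
    (q : Fin N × Fin N) (J1 : Fin N × Fin N → ℝ) :
    ∫ J2, J2 q * gtInterpGibbs a b t (J1, J2) q.1 q.2
        ∂(Measure.pi fun _ : Fin N × Fin N => gauss)
      = Real.sqrt (1-t) * b q.1 q.2 *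
        ∫ J2, (1 - gtInterpGibbs a b t (J1, J2) q.1 q.2 ^ 2)
          ∂(Measure.pi fun _ : Fin N × Fin N => gauss) := by
  have hGc : Continuous fun J2 : Fin N × Fin N → ℝ => gtInterpGibbs a b t (J1, J2) q.1 q.2 :=
    (continuous_gibbs a b t q.1 q.2).comp (continuous_const.prodMk continuous_id)
  have hGb : ∀ J2, |gtInterpGibbs a b t (J1, J2) q.1 q.2| ≤ 1 :=
    fun J2 => abs_gibbs_le_one a b t (J1, J2) q.1 q.2
  have hr : 0 ≤ Real.sqrt (1-t) * b q.1 q.2 :=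
    mul_nonneg (Real.sqrt_nonneg _) (hb q.1 q.2)
  have hf2b : ∀ J2 : Fin N × Fin N → ℝ,
      |Real.sqrt (1-t) * b q.1 q.2 * (1 - gtInterpGibbs a b t (J1, J2) q.1 q.2 ^ 2)|
        ≤ Real.sqrt (1-t) * b q.1 q.2 := by
    intro J2
    obtain ⟨h1, h2⟩ := one_sub_sq_bounds a b t (J1, J2) q.1 q.2
    rw [abs_mul, abs_of_nonneg hr, abs_of_nonneg h1]
    calc Real.sqrt (1-t) * b q.1 q.2 * (1 - gtInterpGibbs a b t (J1, J2) q.1 q.2 ^ 2)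
        ≤ Real.sqrt (1-t) * b q.1 q.2 * 1 := mul_le_mul_of_nonneg_left h2 hr
      _ = Real.sqrt (1-t) * b q.1 q.2 := mul_one _
  have hfint : Integrable (fun J2 : Fin N × Fin N → ℝ =>
      J2 q * gtInterpGibbs a b t (J1, J2) q.1 q.2)
      (Measure.pi fun _ : Fin N × Fin N => gauss) := by
    refine Integrable.mono' (integrable_eval_piG q).abs
      (((continuous_apply q).mul hGc).aestronglyMeasurable) (ae_of_all _ fun J2 => ?_)
    rw [Real.norm_eq_abs]
    calc |J2 q * gtInterpGibbs a b t (J1, J2) q.1 q.2|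
        = |J2 q| * |gtInterpGibbs a b t (J1, J2) q.1 q.2| := abs_mul _ _
      _ ≤ |J2 q| * 1 := mul_le_mul_of_nonneg_left (hGb J2) (abs_nonneg _)
      _ = |J2 q| := mul_one _
  have hf2int : Integrable (fun J2 : Fin N × Fin N → ℝ =>
      Real.sqrt (1-t) * b q.1 q.2 * (1 - gtInterpGibbs a b t (J1, J2) q.1 q.2 ^ 2))
      (Measure.pi fun _ : Fin N × Fin N => gauss) :=
    integrable_of_bounded
      ((continuous_const.mul (continuous_const.sub (hGc.pow 2))).aestronglyMeasurable)
      _ hf2b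
  rw [integral_update_pi (fun _ : Fin N × Fin N => gauss) q
    (fun J2 => J2 q * gtInterpGibbs a b t (J1, J2) q.1 q.2) hfint]
  have hinner : (fun J2 => ∫ x, (fun J2 => J2 q * gtInterpGibbs a b t (J1, J2) q.1 q.2)
        (Function.update J2 q x) ∂gauss)
      = fun J2 => ∫ x, (fun J2 => Real.sqrt (1-t) * b q.1 q.2 *
          (1 - gtInterpGibbs a b t (J1, J2) q.1 q.2 ^ 2)) (Function.update J2 q x) ∂gauss := by
    funext J2
    have hshape : (fun x => (fun J2 => J2 q * gtInterpGibbs a b t (J1, J2) q.1 q.2)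
        (Function.update J2 q x))
        = fun x => x * gtInterpGibbs a b t (J1, Function.update J2 q x) q.1 q.2 := by
      funext x
      simp [Function.update_self]
    rw [hshape]
    have hd : ∀ x, HasDerivAt
        (fun y => gtInterpGibbs a b t (J1, Function.update J2 q y) q.1 q.2)
        (Real.sqrt (1-t) * b q.1 q.2 *
          (1 - gtInterpGibbs a b t (J1, Function.update J2 q x) q.1 q.2 ^ 2)) x :=
      fun x => hasDerivAt_gibbs_snd a b t (J1, J2) q x
    exact gaussian_ibp _ _ (Real.sqrt (1-t) * b q.1 q.2) hd (fun x => hGb _) (fun x => hf2b _)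
  rw [hinner]
  rw [← integral_update_pi (fun _ : Fin N × Fin N => gauss) q
    (fun J2 => Real.sqrt (1-t) * b q.1 q.2 *
      (1 - gtInterpGibbs a b t (J1, J2) q.1 q.2 ^ 2)) hf2int]
  exact integral_const_mul _ _

lemma claim_fst (a b : Fin N → Fin N → ℝ) (ha : ∀ i j, 0 ≤ a i j) (t : ℝ)
    (q : Fin N × Fin N) :
    ∫ J, J.1 q * gtInterpGibbs a b t J q.1 q.2 ∂(disorderMeasure N)
      = Real.sqrt t * a q.1 q.2 *
        ∫ J, (1 - gtInterpGibbs a b t J q.1 q.2 ^ 2) ∂(disorderMeasure N) := by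
  have hGc : Continuous fun J : (Fin N × Fin N → ℝ) × (Fin N × Fin N → ℝ) =>
      gtInterpGibbs a b t J q.1 q.2 := continuous_gibbs a b t q.1 q.2
  have hGb : ∀ J, |gtInterpGibbs a b t J q.1 q.2| ≤ 1 :=
    fun J => abs_gibbs_le_one a b t J q.1 q.2
  have hint : Integrable (fun J : (Fin N × Fin N → ℝ) × (Fin N × Fin N → ℝ) =>
      J.1 q * gtInterpGibbs a b t J q.1 q.2) (disorderMeasure N) := by
    refine Integrable.mono' (integrable_fst_eval q).abs
      ((((continuous_apply q).comp continuous_fst).mul hGc).aestronglyMeasurable)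
      (ae_of_all _ fun J => ?_)
    rw [Real.norm_eq_abs]
    calc |J.1 q * gtInterpGibbs a b t J q.1 q.2|
        = |J.1 q| * |gtInterpGibbs a b t J q.1 q.2| := abs_mul _ _
      _ ≤ |J.1 q| * 1 := mul_le_mul_of_nonneg_left (hGb J) (abs_nonneg _)
      _ = |J.1 q| := mul_one _
  have hint2 : Integrable (fun J : (Fin N × Fin N → ℝ) × (Fin N × Fin N → ℝ) =>
      (1 - gtInterpGibbs a b t J q.1 q.2 ^ 2)) (disorderMeasure N) :=
    integrable_of_bounded ((continuous_const.sub (hGc.pow 2)).aestronglyMeasurable) 1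
      (fun J => by
        obtain ⟨h1, h2⟩ := one_sub_sq_bounds a b t J q.1 q.2
        rw [abs_of_nonneg h1]; exact h2)
  rw [disorder_eq] at hint hint2 ⊢
  rw [integral_prod_symm _ hint, integral_prod_symm _ hint2]
  have hinner : (fun J2 => ∫ J1, (fun J : (Fin N × Fin N → ℝ) × (Fin N × Fin N → ℝ) =>
        J.1 q * gtInterpGibbs a b t J q.1 q.2) (J1, J2)
        ∂(Measure.pi fun _ : Fin N × Fin N => gauss))
      = fun J2 => Real.sqrt t * a q.1 q.2 *
          ∫ J1, (1 - gtInterpGibbs a b t (J1, J2) q.1 q.2 ^ 2)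
            ∂(Measure.pi fun _ : Fin N × Fin N => gauss) := by
    funext J2
    exact inner_ibp_fst a b ha t q J2
  rw [hinner]
  rw [integral_const_mul]

lemma claim_snd (a b : Fin N → Fin N → ℝ) (hb : ∀ i j, 0 ≤ b i j) (t : ℝ)
    (q : Fin N × Fin N) :
    ∫ J, J.2 q * gtInterpGibbs a b t J q.1 q.2 ∂(disorderMeasure N)
      = Real.sqrt (1-t) * b q.1 q.2 *
        ∫ J, (1 - gtInterpGibbs a b t J q.1 q.2 ^ 2) ∂(disorderMeasure N) := by
  have hGc : Continuous fun J : (Fin N × Fin N → ℝ) × (Fin N × Fin N → ℝ) =>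
      gtInterpGibbs a b t J q.1 q.2 := continuous_gibbs a b t q.1 q.2
  have hGb : ∀ J, |gtInterpGibbs a b t J q.1 q.2| ≤ 1 :=
    fun J => abs_gibbs_le_one a b t J q.1 q.2
  have hint : Integrable (fun J : (Fin N × Fin N → ℝ) × (Fin N × Fin N → ℝ) =>
      J.2 q * gtInterpGibbs a b t J q.1 q.2) (disorderMeasure N) := by
    refine Integrable.mono' (integrable_snd_eval q).abs
      ((((continuous_apply q).comp continuous_snd).mul hGc).aestronglyMeasurable)
      (ae_of_all _ fun J => ?_)
    rw [Real.norm_eq_abs]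
    calc |J.2 q * gtInterpGibbs a b t J q.1 q.2|
        = |J.2 q| * |gtInterpGibbs a b t J q.1 q.2| := abs_mul _ _
      _ ≤ |J.2 q| * 1 := mul_le_mul_of_nonneg_left (hGb J) (abs_nonneg _)
      _ = |J.2 q| := mul_one _
  have hint2 : Integrable (fun J : (Fin N × Fin N → ℝ) × (Fin N × Fin N → ℝ) =>
      (1 - gtInterpGibbs a b t J q.1 q.2 ^ 2)) (disorderMeasure N) :=
    integrable_of_bounded ((continuous_const.sub (hGc.pow 2)).aestronglyMeasurable) 1
      (fun J => by
        obtain ⟨h1, h2⟩ := one_sub_sq_bounds a b t J q.1 q.2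
        rw [abs_of_nonneg h1]; exact h2)
  rw [disorder_eq] at hint hint2 ⊢
  rw [integral_prod _ hint, integral_prod _ hint2]
  have hinner : (fun J1 => ∫ J2, (fun J : (Fin N × Fin N → ℝ) × (Fin N × Fin N → ℝ) =>
        J.2 q * gtInterpGibbs a b t J q.1 q.2) (J1, J2)
        ∂(Measure.pi fun _ : Fin N × Fin N => gauss))
      = fun J1 => Real.sqrt (1-t) * b q.1 q.2 *
          ∫ J2, (1 - gtInterpGibbs a b t (J1, J2) q.1 q.2 ^ 2)
            ∂(Measure.pi fun _ : Fin N × Fin N => gauss) := by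
    funext J1
    exact inner_ibp_snd a b hb t q J1
  rw [hinner]
  rw [integral_const_mul]

/-! ### Further continuity and integrability lemmas -/

lemma continuous_gA (c : Fin N → Fin N → ℝ) (σ : Fin N → Bool) :
    Continuous fun J1 : Fin N × Fin N → ℝ => gA c J1 σ := by
  unfold gA; fun_prop

lemma continuous_gdF (a b : Fin N → Fin N → ℝ) (s : ℝ) :
    Continuous fun J : (Fin N × Fin N → ℝ) × (Fin N × Fin N → ℝ) => gdF a b s J := by
  unfold gdF
  apply Continuous.div _ (continuous_gZ a b s) (fun J => (gZ_pos a b s J).ne')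
  apply continuous_finset_sum
  intro σ _
  exact (continuous_H a b s σ).rexp.mul
    ((((continuous_gA a σ).comp continuous_fst).div_const _).sub
      (((continuous_gA b σ).comp continuous_snd).div_const _))

lemma integrable_JG_fst (a b : Fin N → Fin N → ℝ) (t : ℝ) (q : Fin N × Fin N) :
    Integrable (fun J : (Fin N × Fin N → ℝ) × (Fin N × Fin N → ℝ) =>
      J.1 q * gtInterpGibbs a b t J q.1 q.2) (disorderMeasure N) := by
  have hGc : Continuous fun J : (Fin N × Fin N → ℝ) × (Fin N × Fin N → ℝ) =>
      gtInterpGibbs a b t J q.1 q.2 := continuous_gibbs a b t q.1 q.2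
  refine Integrable.mono' (integrable_fst_eval q).abs
    ((((continuous_apply q).comp continuous_fst).mul hGc).aestronglyMeasurable)
    (ae_of_all _ fun J => ?_)
  rw [Real.norm_eq_abs]
  calc |J.1 q * gtInterpGibbs a b t J q.1 q.2|
      = |J.1 q| * |gtInterpGibbs a b t J q.1 q.2| := abs_mul _ _
    _ ≤ |J.1 q| * 1 := mul_le_mul_of_nonneg_left (abs_gibbs_le_one a b t J q.1 q.2)
        (abs_nonneg _)
    _ = |J.1 q| := mul_one _

lemma integrable_JG_snd (a b : Fin N → Fin N → ℝ) (t : ℝ) (q : Fin N × Fin N) :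
    Integrable (fun J : (Fin N × Fin N → ℝ) × (Fin N × Fin N → ℝ) =>
      J.2 q * gtInterpGibbs a b t J q.1 q.2) (disorderMeasure N) := by
  have hGc : Continuous fun J : (Fin N × Fin N → ℝ) × (Fin N × Fin N → ℝ) =>
      gtInterpGibbs a b t J q.1 q.2 := continuous_gibbs a b t q.1 q.2
  refine Integrable.mono' (integrable_snd_eval q).abs
    ((((continuous_apply q).comp continuous_snd).mul hGc).aestronglyMeasurable)
    (ae_of_all _ fun J => ?_)
  rw [Real.norm_eq_abs]
  calc |J.2 q * gtInterpGibbs a b t J q.1 q.2|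
      = |J.2 q| * |gtInterpGibbs a b t J q.1 q.2| := abs_mul _ _
    _ ≤ |J.2 q| * 1 := mul_le_mul_of_nonneg_left (abs_gibbs_le_one a b t J q.1 q.2)
        (abs_nonneg _)
    _ = |J.2 q| := mul_one _

lemma integrable_one_sub_sq (a b : Fin N → Fin N → ℝ) (t : ℝ) (q : Fin N × Fin N) :
    Integrable (fun J : (Fin N × Fin N → ℝ) × (Fin N × Fin N → ℝ) =>
      1 - gtInterpGibbs a b t J q.1 q.2 ^ 2) (disorderMeasure N) :=
  integrable_of_bounded
    ((continuous_const.sub ((continuous_gibbs a b t q.1 q.2).pow 2)).aestronglyMeasurable) 1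
    (fun J => by
      obtain ⟨h1, h2⟩ := one_sub_sq_bounds a b t J q.1 q.2
      rw [abs_of_nonneg h1]; exact h2)

lemma integrable_Astar (a : Fin N → Fin N → ℝ) :
    Integrable (fun J : (Fin N × Fin N → ℝ) × (Fin N × Fin N → ℝ) =>
      ∑ p : Fin N × Fin N, a p.1 p.2 * |J.1 p|) (disorderMeasure N) :=
  integrable_finset_sum _ fun p _ => ((integrable_fst_eval p).abs.const_mul _)

lemma integrable_Bstar (b : Fin N → Fin N → ℝ) :
    Integrable (fun J : (Fin N × Fin N → ℝ) × (Fin N × Fin N → ℝ) =>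
      ∑ p : Fin N × Fin N, b p.1 p.2 * |J.2 p|) (disorderMeasure N) :=
  integrable_finset_sum _ fun p _ => ((integrable_snd_eval p).abs.const_mul _)

end GTSys

/-- Guerra–Toninelli interpolation derivative formula. For nonnegative
coefficients `a_{ij}`, `b_{ij}` and independent standard Gaussians `J, J'`, the function
`t ↦ E[log Tr exp(√t Σ a_{ij} J_{ij} σ_iσ_j + √(1-t) Σ b_{ij} J'_{ij} σ_iσ_j)]` is
differentiable on `(0,1)` with derivative
`(1/2) E[Σ a_{ij}² (1 - ⟨σ_iσ_j⟩²) - Σ b_{ij}² (1 - ⟨σ_iσ_j⟩²)]`. -/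
theorem guerra_toninelli_interpolation_deriv (N : ℕ) (a b : Fin N → Fin N → ℝ)
    (ha : ∀ i j, 0 ≤ a i j) (hb : ∀ i j, 0 ≤ b i j)
    (t : ℝ) (ht : t ∈ Set.Ioo (0 : ℝ) 1) :
    HasDerivAt (fun s => ∫ J,
        Real.log (∑ σ : Fin N → Bool, Real.exp (gtInterpH a b s J σ))
        ∂(disorderMeasure N))
      ((1 / 2) * ∫ J,
        ((∑ p : Fin N × Fin N,
            (a p.1 p.2) ^ 2 * (1 - (gtInterpGibbs a b t J p.1 p.2) ^ 2))
          - ∑ p : Fin N × Fin N,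
            (b p.1 p.2) ^ 2 * (1 - (gtInterpGibbs a b t J p.1 p.2) ^ 2))
        ∂(disorderMeasure N)) t := by
  classical
  obtain ⟨ht0, ht1⟩ := ht
  have h1t0 : (0:ℝ) < 1 - t := by linarith
  set ε : ℝ := min (t/2) ((1-t)/2) with hεdef
  have hε0 : 0 < ε := lt_min (by linarith) (by linarith)
  have hball : ∀ s ∈ Metric.ball t ε, s ∈ Set.Ioo (0:ℝ) 1 ∧ t/2 ≤ s ∧ (1-t)/2 ≤ 1 - s := by
    intro s hs
    rw [Metric.mem_ball, Real.dist_eq, abs_lt] at hs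
    have he1 : ε ≤ t/2 := min_le_left _ _
    have he2 : ε ≤ (1-t)/2 := min_le_right _ _
    refine ⟨⟨by linarith [hs.1], by linarith [hs.2]⟩, by linarith [hs.1], by linarith [hs.2]⟩
  set bnd : (Fin N × Fin N → ℝ) × (Fin N × Fin N → ℝ) → ℝ := fun J =>
    (2 * Real.sqrt (t/2))⁻¹ * (∑ p : Fin N × Fin N, a p.1 p.2 * |J.1 p|)
      + (2 * Real.sqrt ((1-t)/2))⁻¹ * (∑ p : Fin N × Fin N, b p.1 p.2 * |J.2 p|) with hbnddef
  have hbint : Integrable bnd (disorderMeasure N) :=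
    (((GTSys.integrable_Astar a).const_mul _).add ((GTSys.integrable_Bstar b).const_mul _))
  have hFmeas : ∀ᶠ s in nhds t, AEStronglyMeasurable
      (fun J => Real.log (GTSys.gZ a b s J)) (disorderMeasure N) :=
    Filter.Eventually.of_forall fun s =>
      ((GTSys.continuous_gZ a b s).log fun J => (GTSys.gZ_pos a b s J).ne').aestronglyMeasurable
  have hFint : Integrable (fun J => Real.log (GTSys.gZ a b t J)) (disorderMeasure N) := by
    refine Integrable.mono'
      ((integrable_const (Real.log (Fintype.card (Fin N → Bool)))).add
        ((GTSys.integrable_Astar a).add (GTSys.integrable_Bstar b)))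
      ((GTSys.continuous_gZ a b t).log fun J =>
        (GTSys.gZ_pos a b t J).ne').aestronglyMeasurable
      (ae_of_all _ fun J => ?_)
    rw [Real.norm_eq_abs]
    exact GTSys.abs_log_gZ_le a b ha hb ht0.le ht1.le J
  have hF'meas : AEStronglyMeasurable (fun J => GTSys.gdF a b t J) (disorderMeasure N) :=
    (GTSys.continuous_gdF a b t).aestronglyMeasurable
  have hbound : ∀ᵐ J ∂(disorderMeasure N), ∀ s ∈ Metric.ball t ε,
      ‖GTSys.gdF a b s J‖ ≤ bnd J := by
    refine ae_of_all _ fun J s hs => ?_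
    obtain ⟨hsIoo, hs1, hs2⟩ := hball s hs
    rw [Real.norm_eq_abs]
    refine (GTSys.abs_gdF_le a b ha hb s J).trans ?_
    have hnn1 : (0:ℝ) ≤ ∑ p : Fin N × Fin N, a p.1 p.2 * |J.1 p| :=
      Finset.sum_nonneg fun p _ => mul_nonneg (ha p.1 p.2) (abs_nonneg _)
    have hnn2 : (0:ℝ) ≤ ∑ p : Fin N × Fin N, b p.1 p.2 * |J.2 p| :=
      Finset.sum_nonneg fun p _ => mul_nonneg (hb p.1 p.2) (abs_nonneg _)
    have hi1 : (2 * Real.sqrt s)⁻¹ ≤ (2 * Real.sqrt (t/2))⁻¹ := by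
      apply inv_anti₀
      · have : (0:ℝ) < Real.sqrt (t/2) := Real.sqrt_pos.mpr (by linarith)
        linarith
      · have := Real.sqrt_le_sqrt hs1
        linarith
    have hi2 : (2 * Real.sqrt (1-s))⁻¹ ≤ (2 * Real.sqrt ((1-t)/2))⁻¹ := by
      apply inv_anti₀
      · have : (0:ℝ) < Real.sqrt ((1-t)/2) := Real.sqrt_pos.mpr (by linarith)
        linarith
      · have := Real.sqrt_le_sqrt hs2
        linarith
    exact add_le_add (mul_le_mul_of_nonneg_right hi1 hnn1)
      (mul_le_mul_of_nonneg_right hi2 hnn2)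
  have hdiff : ∀ᵐ J ∂(disorderMeasure N), ∀ s ∈ Metric.ball t ε,
      HasDerivAt (fun s => Real.log (GTSys.gZ a b s J)) (GTSys.gdF a b s J) s :=
    ae_of_all _ fun J s hs => GTSys.hasDerivAt_log_gZ a b (hball s hs).1 J
  have hmain := (hasDerivAt_integral_of_dominated_loc_of_deriv_le (Metric.ball_mem_nhds t hε0) hFmeas hFint hF'meas
    hbound hbint hdiff).2
  have h_st : Real.sqrt t ≠ 0 := (Real.sqrt_pos.mpr ht0).ne'
  have h_s1t : Real.sqrt (1-t) ≠ 0 := (Real.sqrt_pos.mpr h1t0).ne'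
  have hA' : ∀ p : Fin N × Fin N,
      ∫ J, (a p.1 p.2 * J.1 p / (2 * Real.sqrt t)) * gtInterpGibbs a b t J p.1 p.2
        ∂(disorderMeasure N)
      = a p.1 p.2 ^ 2 / 2 *
        ∫ J, (1 - gtInterpGibbs a b t J p.1 p.2 ^ 2) ∂(disorderMeasure N) := by
    intro p
    rw [show (fun J : (Fin N × Fin N → ℝ) × (Fin N × Fin N → ℝ) =>
        (a p.1 p.2 * J.1 p / (2 * Real.sqrt t)) * gtInterpGibbs a b t J p.1 p.2)
        = fun J => (a p.1 p.2 / (2 * Real.sqrt t)) *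
            (J.1 p * gtInterpGibbs a b t J p.1 p.2) from funext fun J => by ring]
    rw [integral_const_mul, GTSys.claim_fst a b ha t p]
    field_simp
  have hB' : ∀ p : Fin N × Fin N,
      ∫ J, (b p.1 p.2 * J.2 p / (2 * Real.sqrt (1-t))) * gtInterpGibbs a b t J p.1 p.2
        ∂(disorderMeasure N)
      = b p.1 p.2 ^ 2 / 2 *
        ∫ J, (1 - gtInterpGibbs a b t J p.1 p.2 ^ 2) ∂(disorderMeasure N) := by
    intro p
    rw [show (fun J : (Fin N × Fin N → ℝ) × (Fin N × Fin N → ℝ) =>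
        (b p.1 p.2 * J.2 p / (2 * Real.sqrt (1-t))) * gtInterpGibbs a b t J p.1 p.2)
        = fun J => (b p.1 p.2 / (2 * Real.sqrt (1-t))) *
            (J.2 p * gtInterpGibbs a b t J p.1 p.2) from funext fun J => by ring]
    rw [integral_const_mul, GTSys.claim_snd a b hb t p]
    field_simp
  have hintA : ∀ p : Fin N × Fin N, Integrable
      (fun J : (Fin N × Fin N → ℝ) × (Fin N × Fin N → ℝ) =>
        (a p.1 p.2 * J.1 p / (2 * Real.sqrt t)) * gtInterpGibbs a b t J p.1 p.2)
      (disorderMeasure N) := by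
    intro p
    rw [show (fun J : (Fin N × Fin N → ℝ) × (Fin N × Fin N → ℝ) =>
        (a p.1 p.2 * J.1 p / (2 * Real.sqrt t)) * gtInterpGibbs a b t J p.1 p.2)
        = fun J => (a p.1 p.2 / (2 * Real.sqrt t)) *
            (J.1 p * gtInterpGibbs a b t J p.1 p.2) from funext fun J => by ring]
    exact (GTSys.integrable_JG_fst a b t p).const_mul _
  have hintB : ∀ p : Fin N × Fin N, Integrable
      (fun J : (Fin N × Fin N → ℝ) × (Fin N × Fin N → ℝ) =>
        (b p.1 p.2 * J.2 p / (2 * Real.sqrt (1-t))) * gtInterpGibbs a b t J p.1 p.2)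
      (disorderMeasure N) := by
    intro p
    rw [show (fun J : (Fin N × Fin N → ℝ) × (Fin N × Fin N → ℝ) =>
        (b p.1 p.2 * J.2 p / (2 * Real.sqrt (1-t))) * gtInterpGibbs a b t J p.1 p.2)
        = fun J => (b p.1 p.2 / (2 * Real.sqrt (1-t))) *
            (J.2 p * gtInterpGibbs a b t J p.1 p.2) from funext fun J => by ring]
    exact (GTSys.integrable_JG_snd a b t p).const_mul _
  have hval : ∫ J, GTSys.gdF a b t J ∂(disorderMeasure N)
      = (1 / 2) * ∫ J,
        ((∑ p : Fin N × Fin N,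
            (a p.1 p.2) ^ 2 * (1 - (gtInterpGibbs a b t J p.1 p.2) ^ 2))
          - ∑ p : Fin N × Fin N,
            (b p.1 p.2) ^ 2 * (1 - (gtInterpGibbs a b t J p.1 p.2) ^ 2))
        ∂(disorderMeasure N) := by
    have hLHS : (fun J => GTSys.gdF a b t J)
        = fun J => (∑ p : Fin N × Fin N,
            (a p.1 p.2 * J.1 p / (2 * Real.sqrt t)) * gtInterpGibbs a b t J p.1 p.2)
          - ∑ p : Fin N × Fin N,
            (b p.1 p.2 * J.2 p / (2 * Real.sqrt (1-t))) * gtInterpGibbs a b t J p.1 p.2 :=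
      funext fun J => GTSys.gdF_eq a b t J
    rw [hLHS]
    rw [integral_sub (integrable_finset_sum _ fun p _ => hintA p)
      (integrable_finset_sum _ fun p _ => hintB p)]
    rw [integral_finset_sum _ fun p _ => hintA p, integral_finset_sum _ fun p _ => hintB p]
    rw [integral_sub
      (integrable_finset_sum _ fun p _ => (GTSys.integrable_one_sub_sq a b t p).const_mul _)
      (integrable_finset_sum _ fun p _ => (GTSys.integrable_one_sub_sq a b t p).const_mul _)]
    rw [integral_finset_sum _ fun p _ => (GTSys.integrable_one_sub_sq a b t p).const_mul _,
      integral_finset_sum _ fun p _ => (GTSys.integrable_one_sub_sq a b t p).const_mul _]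
    rw [mul_sub, Finset.mul_sum, Finset.mul_sum]
    congr 1
    · refine Finset.sum_congr rfl fun p _ => ?_
      rw [hA' p, integral_const_mul]
      ring
    · refine Finset.sum_congr rfl fun p _ => ?_
      rw [hB' p, integral_const_mul]
      ring
  rw [hval] at hmain
  exact hmain
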